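/- Every binary idempotent polymorphism of the partially reflexive path P_{10α01} is a projection (i.e., equals one of the two coordinate projections). -/

import Mathlib

set_option maxHeartbeats 1000000


/-- Edge relation of the partially reflexive path on `Fin n` with loops given by `β`. -/
def pathEdge (n : ℕ) (β : Fin n → Bool) (x y : Fin n) : Prop :=
  x.val + 1 = y.val ∨ y.val + 1 = x.val ∨ (x = y ∧ β x = true)

lemma pe_bound {n : ℕ} {β : Fin n → Bool} {x y : Fin n} (h : pathEdge n β x y) :
    x.val ≤ y.val + 1 ∧ y.val ≤ x.val + 1 := by
  rcases h with h | h | ⟨h, _⟩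
  · omega
  · omega
  · subst h; omega

lemma pe_strict {n : ℕ} {β : Fin n → Bool} {x y : Fin n} (h : pathEdge n β x y)
    (hβ : β y = false) : x.val + 1 = y.val ∨ y.val + 1 = x.val := by
  rcases h with h | h | ⟨h, hl⟩
  · exact Or.inl h
  · exact Or.inr h
  · subst h; simp [hβ] at hl

/-- Main auxiliary lemma: if `f 0 1 = 0` then `f` is the first projection. -/
lemma projLeft (n : ℕ) (hn : n ≥ 4) (β : Fin n → Bool)
    (h0 : β ⟨0, by omega⟩ = true) (h1 : β ⟨1, by omega⟩ = false)
    (h2 : β ⟨n - 2, by omega⟩ = false) (h3 : β ⟨n - 1, by omega⟩ = true)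
    (f : Fin n → Fin n → Fin n)
    (hpoly : ∀ x x' y y' : Fin n, pathEdge n β x y → pathEdge n β x' y' →
      pathEdge n β (f x x') (f y y'))
    (hidem : ∀ x, f x x = x)
    (h01 : (f ⟨0, by omega⟩ ⟨1, by omega⟩).val = 0) :
    ∀ x y, f x y = x := by
  -- upper bound along the first superdiagonal
  have A1 : ∀ i, ∀ h : i + 1 < n, (f ⟨i, by omega⟩ ⟨i + 1, h⟩).val ≤ i := by
    intro i
    induction i with
    | zero => intro h; exact le_of_eq h01
    | succ i ih =>
      intro h
      have hi : i + 1 < n := by omega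
      have e := hpoly ⟨i, by omega⟩ ⟨i + 1, hi⟩ ⟨i + 1, hi⟩ ⟨i + 1 + 1, h⟩
        (Or.inl rfl) (Or.inl rfl)
      have hb := pe_bound e
      have := ih hi
      omega
  -- exact value along the first superdiagonal
  have hA : ∀ d i, ∀ h : i + 1 < n, i + d = n - 2 → (f ⟨i, by omega⟩ ⟨i + 1, h⟩).val = i := by
    intro d
    induction d with
    | zero =>
      intro i h hd
      have hloop : β ⟨i + 1, h⟩ = true := by
        have he : (⟨i + 1, h⟩ : Fin n) = ⟨n - 1, by omega⟩ := by
          apply Fin.ext; simp only [Fin.val_mk]; omega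
        rw [he]; exact h3
      have e := hpoly ⟨i, by omega⟩ ⟨i + 1, h⟩ ⟨i + 1, h⟩ ⟨i + 1, h⟩
        (Or.inl rfl) (Or.inr (Or.inr ⟨rfl, hloop⟩))
      rw [hidem] at e
      have hb := pe_bound e
      have hub := A1 i h
      simp only [Fin.val_mk] at hb ⊢
      omega
    | succ d ihd =>
      intro i h hd
      have h2i : i + 1 + 1 < n := by omega
      have hnext := ihd (i + 1) h2i (by omega)
      have e := hpoly ⟨i, by omega⟩ ⟨i + 1, h⟩ ⟨i + 1, by omega⟩ ⟨i + 1 + 1, h2i⟩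
        (Or.inl rfl) (Or.inl rfl)
      have hb := pe_bound e
      have hub := A1 i h
      omega
  have hAv : ∀ x y : Fin n, y.val = x.val + 1 → (f x y).val = x.val := by
    intro x y hy
    have hy' : y = ⟨x.val + 1, by omega⟩ := by
      apply Fin.ext; simp only [Fin.val_mk]; omega
    rw [hy']
    exact hA (n - 2 - x.val) x.val (by omega) (by omega)
  -- the top corner of the subdiagonal
  have hTop : (f ⟨n - 1, by omega⟩ ⟨n - 2, by omega⟩).val = n - 1 := by
    have e1 := hpoly ⟨n - 1, by omega⟩ ⟨n - 2, by omega⟩ ⟨n - 1, by omega⟩ ⟨n - 1, by omega⟩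
      (Or.inr (Or.inr ⟨rfl, h3⟩)) (Or.inl (by simp only [Fin.val_mk] <;> omega))
    rw [hidem] at e1
    have hb1 := pe_bound e1
    have e2 := hpoly ⟨n - 1, by omega⟩ ⟨n - 2, by omega⟩ ⟨n - 2, by omega⟩ ⟨n - 1, by omega⟩
      (Or.inr (Or.inl (by simp only [Fin.val_mk] <;> omega)))
      (Or.inl (by simp only [Fin.val_mk] <;> omega))
    have hmid : (f ⟨n - 2, by omega⟩ ⟨n - 1, by omega⟩).val = n - 2 := by
      have := hAv ⟨n - 2, by omega⟩ ⟨n - 1, by omega⟩ (by simp only [Fin.val_mk] <;> omega)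
      simpa using this
    have hβmid : β (f ⟨n - 2, by omega⟩ ⟨n - 1, by omega⟩) = false := by
      have he : f ⟨n - 2, by omega⟩ ⟨n - 1, by omega⟩ = ⟨n - 2, by omega⟩ := by
        apply Fin.ext; simp only [Fin.val_mk]; omega
      rw [he]; exact h2
    have hs := pe_strict e2 hβmid
    have hlt := (f ⟨n - 1, by omega⟩ ⟨n - 2, by omega⟩).isLt
    simp only [Fin.val_mk] at hb1 hs ⊢
    omega
  -- bounds along the first subdiagonal
  have B1 : ∀ i, ∀ h : i + 1 < n, (f ⟨i + 1, h⟩ ⟨i, by omega⟩).val ≤ i + 1 := by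
    intro i
    induction i with
    | zero =>
      intro h
      have e := hpoly ⟨0 + 1, h⟩ ⟨0, by omega⟩ ⟨0, by omega⟩ ⟨0, by omega⟩
        (Or.inr (Or.inl rfl)) (Or.inr (Or.inr ⟨rfl, h0⟩))
      rw [hidem] at e
      have hb := pe_bound e
      simp only [Fin.val_mk] at hb ⊢
      omega
    | succ i ih =>
      intro h
      have hi : i + 1 < n := by omega
      have e := hpoly ⟨i + 1 + 1, h⟩ ⟨i + 1, hi⟩ ⟨i + 1, hi⟩ ⟨i, by omega⟩
        (Or.inr (Or.inl rfl)) (Or.inr (Or.inl rfl))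
      have hb := pe_bound e
      have := ih hi
      omega
  have B2 : ∀ d i, ∀ h : i + 1 < n, i + d = n - 2 → i + 1 ≤ (f ⟨i + 1, h⟩ ⟨i, by omega⟩).val := by
    intro d
    induction d with
    | zero =>
      intro i h hd
      have hx : (⟨i + 1, h⟩ : Fin n) = ⟨n - 1, by omega⟩ := by
        apply Fin.ext; simp only [Fin.val_mk]; omega
      have hy : (⟨i, by omega⟩ : Fin n) = ⟨n - 2, by omega⟩ := by
        apply Fin.ext; simp only [Fin.val_mk]; omega
      rw [hx, hy, hTop]
      omega
    | succ d ihd =>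
      intro i h hd
      have h2i : i + 1 + 1 < n := by omega
      have hnext := ihd (i + 1) h2i (by omega)
      have e := hpoly ⟨i + 1, h⟩ ⟨i, by omega⟩ ⟨i + 1 + 1, h2i⟩ ⟨i + 1, h⟩
        (Or.inl rfl) (Or.inl rfl)
      have hb := pe_bound e
      omega
  have hBv : ∀ x y : Fin n, x.val = y.val + 1 → (f x y).val = x.val := by
    intro x y hx
    have hx' : x = ⟨y.val + 1, by omega⟩ := by
      apply Fin.ext; simp only [Fin.val_mk]; omega
    rw [hx']
    have hu := B1 y.val (by omega)
    have hl := B2 (n - 2 - y.val) y.val (by omega) (by omega)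
    have : (f (⟨y.val + 1, by omega⟩ : Fin n) (⟨y.val, by omega⟩ : Fin n)).val = y.val + 1 := by
      omega
    exact this
  -- the main induction on the gap
  have claim : ∀ k, ∀ x y : Fin n, x.val ≤ y.val + (k + 1) → y.val ≤ x.val + (k + 1) →
      (f x y).val = x.val := by
    intro k
    induction k with
    | zero =>
      intro x y hxy hyx
      rcases Nat.lt_trichotomy x.val y.val with hl | he | hg
      · exact hAv x y (by omega)
      · have hxe : x = y := Fin.ext he
        rw [hxe, hidem]
      · exact hBv x y (by omega)
    | succ k ih =>
      -- upper triangle, gap k+2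
      have hU : ∀ i, ∀ x y : Fin n, x.val = i → y.val = x.val + (k + 2) → (f x y).val = x.val := by
        intro i
        induction i with
        | zero =>
          intro x y hx hy
          have hyn := y.isLt
          have hk2 : k + 2 < n := by omega
          have hx' : x = ⟨0, by omega⟩ := by
            apply Fin.ext; simp only [Fin.val_mk]; omega
          have hy' : y = ⟨k + 2, hk2⟩ := by
            apply Fin.ext; simp only [Fin.val_mk] at hy ⊢; omega
          have e1 := hpoly ⟨0, by omega⟩ ⟨k + 2, hk2⟩ ⟨0, by omega⟩ ⟨k + 1, by omega⟩
            (Or.inr (Or.inr ⟨rfl, h0⟩)) (Or.inr (Or.inl rfl))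
          have hb1 := pe_bound e1
          have hv1 : (f ⟨0, by omega⟩ ⟨k + 1, by omega⟩).val = 0 := by
            have := ih ⟨0, by omega⟩ ⟨k + 1, by omega⟩
              (by simp only [Fin.val_mk] <;> omega) (by simp only [Fin.val_mk] <;> omega)
            simpa using this
          have e2 := hpoly ⟨0, by omega⟩ ⟨k + 2, hk2⟩ ⟨1, by omega⟩ ⟨k + 1, by omega⟩
            (Or.inl rfl) (Or.inr (Or.inl rfl))
          have hv2 : (f ⟨1, by omega⟩ ⟨k + 1, by omega⟩).val = 1 := by
            have := ih ⟨1, by omega⟩ ⟨k + 1, by omega⟩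
              (by simp only [Fin.val_mk] <;> omega) (by simp only [Fin.val_mk] <;> omega)
            simpa using this
          have hβ2 : β (f ⟨1, by omega⟩ ⟨k + 1, by omega⟩) = false := by
            have he : f ⟨1, by omega⟩ ⟨k + 1, by omega⟩ = ⟨1, by omega⟩ := by
              apply Fin.ext; simp only [Fin.val_mk]; omega
            rw [he]; exact h1
          have hs := pe_strict e2 hβ2
          rw [congrArg₂ f hx' hy']
          simp only [Fin.val_mk] at hb1 hs ⊢
          omega
        | succ i ihi =>
          intro x y hx hy
          have hyn := y.isLt
          have hx' : x = ⟨i + 1, by omega⟩ := by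
            apply Fin.ext; simp only [Fin.val_mk]; omega
          have hy' : y = ⟨i + k + 3, by omega⟩ := by
            apply Fin.ext; simp only [Fin.val_mk] at hy ⊢; omega
          have e1 := hpoly ⟨i + 1, by omega⟩ ⟨i + k + 3, by omega⟩ ⟨i, by omega⟩
            ⟨i + k + 2, by omega⟩
            (Or.inr (Or.inl rfl)) (Or.inr (Or.inl (by simp only [Fin.val_mk] <;> omega)))
          have hv1 : (f ⟨i, by omega⟩ ⟨i + k + 2, by omega⟩).val = i := by
            have := ihi ⟨i, by omega⟩ ⟨i + k + 2, by omega⟩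
              (by simp only [Fin.val_mk]) (by simp only [Fin.val_mk] <;> omega)
            simpa using this
          have e2 := hpoly ⟨i + 1, by omega⟩ ⟨i + k + 3, by omega⟩ ⟨i + 2, by omega⟩
            ⟨i + k + 2, by omega⟩
            (Or.inl (by simp only [Fin.val_mk] <;> omega))
            (Or.inr (Or.inl (by simp only [Fin.val_mk] <;> omega)))
          have hv2 : (f ⟨i + 2, by omega⟩ ⟨i + k + 2, by omega⟩).val = i + 2 := by
            have := ih ⟨i + 2, by omega⟩ ⟨i + k + 2, by omega⟩
              (by simp only [Fin.val_mk] <;> omega) (by simp only [Fin.val_mk] <;> omega)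
            simpa using this
          have hb1 := pe_bound e1
          have hb2 := pe_bound e2
          rw [congrArg₂ f hx' hy']
          omega
      -- lower triangle, gap k+2
      have hL : ∀ d, ∀ x y : Fin n, x.val + d = n - 1 → x.val = y.val + (k + 2) →
          (f x y).val = x.val := by
        intro d
        induction d with
        | zero =>
          intro x y hx hy
          have hyn := y.isLt
          have hxn := x.isLt
          have hkn : k + 3 ≤ n := by omega
          have hx' : x = ⟨n - 1, by omega⟩ := by
            apply Fin.ext; simp only [Fin.val_mk]; omega
          have hy' : y = ⟨n - k - 3, by omega⟩ := by
            apply Fin.ext; simp only [Fin.val_mk] at hy ⊢; omega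
          have e1 := hpoly ⟨n - 1, by omega⟩ ⟨n - k - 3, by omega⟩ ⟨n - 1, by omega⟩
            ⟨n - k - 2, by omega⟩
            (Or.inr (Or.inr ⟨rfl, h3⟩)) (Or.inl (by simp only [Fin.val_mk] <;> omega))
          have hv1 : (f ⟨n - 1, by omega⟩ ⟨n - k - 2, by omega⟩).val = n - 1 := by
            have := ih ⟨n - 1, by omega⟩ ⟨n - k - 2, by omega⟩
              (by simp only [Fin.val_mk] <;> omega) (by simp only [Fin.val_mk] <;> omega)
            simpa using this
          have e2 := hpoly ⟨n - 1, by omega⟩ ⟨n - k - 3, by omega⟩ ⟨n - 2, by omega⟩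
            ⟨n - k - 2, by omega⟩
            (Or.inr (Or.inl (by simp only [Fin.val_mk] <;> omega)))
            (Or.inl (by simp only [Fin.val_mk] <;> omega))
          have hv2 : (f ⟨n - 2, by omega⟩ ⟨n - k - 2, by omega⟩).val = n - 2 := by
            have := ih ⟨n - 2, by omega⟩ ⟨n - k - 2, by omega⟩
              (by simp only [Fin.val_mk] <;> omega) (by simp only [Fin.val_mk] <;> omega)
            simpa using this
          have hβ2 : β (f ⟨n - 2, by omega⟩ ⟨n - k - 2, by omega⟩) = false := by
            have he : f ⟨n - 2, by omega⟩ ⟨n - k - 2, by omega⟩ = ⟨n - 2, by omega⟩ := by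
              apply Fin.ext; simp only [Fin.val_mk]; omega
            rw [he]; exact h2
          have hb1 := pe_bound e1
          have hs := pe_strict e2 hβ2
          rw [congrArg₂ f hx' hy']
          simp only [Fin.val_mk] at hb1 hs ⊢
          omega
        | succ d ihd =>
          intro x y hx hy
          have hyn := y.isLt
          have hxn := x.isLt
          have hv1 : (f ⟨x.val + 1, by omega⟩ ⟨y.val + 1, by omega⟩).val = x.val + 1 := by
            have := ihd ⟨x.val + 1, by omega⟩ ⟨y.val + 1, by omega⟩
              (by simp only [Fin.val_mk] <;> omega) (by simp only [Fin.val_mk] <;> omega)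
            simpa using this
          have hv2 : (f ⟨x.val - 1, by omega⟩ ⟨y.val + 1, by omega⟩).val = x.val - 1 := by
            have := ih ⟨x.val - 1, by omega⟩ ⟨y.val + 1, by omega⟩
              (by simp only [Fin.val_mk] <;> omega) (by simp only [Fin.val_mk] <;> omega)
            simpa using this
          have e1 := hpoly x y ⟨x.val + 1, by omega⟩ ⟨y.val + 1, by omega⟩
            (Or.inl (by simp only [Fin.val_mk])) (Or.inl (by simp only [Fin.val_mk]))
          have e2 := hpoly x y ⟨x.val - 1, by omega⟩ ⟨y.val + 1, by omega⟩
            (Or.inr (Or.inl (by simp only [Fin.val_mk] <;> omega)))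
            (Or.inl (by simp only [Fin.val_mk]))
          have hb1 := pe_bound e1
          have hb2 := pe_bound e2
          omega
      intro x y hxy hyx
      have hd : (x.val ≤ y.val + (k + 1) ∧ y.val ≤ x.val + (k + 1)) ∨
          y.val = x.val + (k + 2) ∨ x.val = y.val + (k + 2) := by omega
      rcases hd with ⟨ha, hb⟩ | hc | hc
      · exact ih x y ha hb
      · exact hU x.val x y rfl hc
      · exact hL (n - 1 - x.val) x y (by omega) hc
  intro x y
  exact Fin.ext (claim n x y (by omega) (by omega))

/-- Every binary idempotent polymorphism of the partially reflexive path
`P_{10α01}` (first vertex looped, second loopless, second-to-last loopless,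
last looped, with `α` arbitrary in between) is a projection. -/
theorem binary_idempotent_polymorphisms_are_projections
    (n : ℕ) (hn : 4 ≤ n) (β : Fin n → Bool)
    (h0 : β ⟨0, by omega⟩ = true) (h1 : β ⟨1, by omega⟩ = false)
    (h2 : β ⟨n - 2, by omega⟩ = false) (h3 : β ⟨n - 1, by omega⟩ = true)
    (f : Fin n → Fin n → Fin n)
    (hpoly : ∀ x x' y y' : Fin n, pathEdge n β x y → pathEdge n β x' y' →
      pathEdge n β (f x x') (f y y'))
    (hidem : ∀ x, f x x = x) :
    (∀ x y, f x y = x) ∨ (∀ x y, f x y = y) := by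
  have e := hpoly ⟨0, by omega⟩ ⟨1, by omega⟩ ⟨0, by omega⟩ ⟨0, by omega⟩
    (Or.inr (Or.inr ⟨rfl, h0⟩)) (Or.inr (Or.inl rfl))
  rw [hidem] at e
  have hb := pe_bound e
  by_cases hu : (f ⟨0, by omega⟩ ⟨1, by omega⟩).val = 0
  · exact Or.inl (projLeft n hn β h0 h1 h2 h3 f hpoly hidem hu)
  · have hu1 : (f ⟨0, by omega⟩ ⟨1, by omega⟩).val = 1 := by
      simp only [Fin.val_mk] at hb
      omega
    have e1 := hpoly ⟨1, by omega⟩ ⟨0, by omega⟩ ⟨0, by omega⟩ ⟨0, by omega⟩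
      (Or.inr (Or.inl rfl)) (Or.inr (Or.inr ⟨rfl, h0⟩))
    rw [hidem] at e1
    have hb1 := pe_bound e1
    have e2 := hpoly ⟨1, by omega⟩ ⟨0, by omega⟩ ⟨0, by omega⟩ ⟨1, by omega⟩
      (Or.inr (Or.inl rfl)) (Or.inl rfl)
    have hβu : β (f ⟨0, by omega⟩ ⟨1, by omega⟩) = false := by
      have he : f ⟨0, by omega⟩ ⟨1, by omega⟩ = ⟨1, by omega⟩ := by
        apply Fin.ext; simp only [Fin.val_mk]; omega
      rw [he]; exact h1
    have hs := pe_strict e2 hβu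
    have hv : ((fun a b => f b a) (⟨0, by omega⟩ : Fin n) (⟨1, by omega⟩ : Fin n)).val = 0 := by
      simp only [Fin.val_mk] at hb1 hs
      simp only []
      omega
    have hp := projLeft n hn β h0 h1 h2 h3 (fun a b => f b a)
      (fun x x' y y' hxy hxy' => hpoly x' x y' y hxy' hxy) (fun x => hidem x) hv
    exact Or.inr (fun x y => hp y x)
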